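/- Let (q_k, s_k) be a sequence in ℝ × (0,∞)∖{1,2} converging to (q,s) ∈ ℝ × (0,∞)∖{1,2}. Then ψ^{q_k,s_k}(i)^{1/|i|} → ψ^{q,s}(i)^{1/|i|} uniformly over all finite words i ∈ Σ_*. -/

import Mathlib

open MeasureTheory Filter Topology

/-- The prefix of length `n` of an infinite word in the shift space `{1,…,N}^ℕ`. -/
def wordPrefix {N : ℕ} (x : ℕ → Fin N) (n : ℕ) : List (Fin N) :=
  List.ofFn fun k : Fin n => x k

/-- The measure of the cylinder set `[w]` as a real number. -/
noncomputable def cylMass {N : ℕ} (μ : MeasureTheory.Measure (ℕ → Fin N)) (w : List (Fin N)) : ℝ :=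
  (μ {x | wordPrefix x w.length = w}).toReal

/-- The Euclidean plane. -/
noncomputable abbrev E2 : Type := EuclideanSpace ℝ (Fin 2)

/-- The product `A_w = A_{w₁} ⋯ A_{wₙ}` of the invertible linear maps along a finite word. -/
noncomputable def wordProd {N : ℕ} (A : Fin N → (E2 ≃L[ℝ] E2)) (w : List (Fin N)) :
    E2 ≃L[ℝ] E2 :=
  (w.map A).prod

/-- `α₁(w) = ‖A_w‖`, the largest singular value (Euclidean operator norm). -/
noncomputable def alpha1 {N : ℕ} (A : Fin N → (E2 ≃L[ℝ] E2)) (w : List (Fin N)) : ℝ :=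
  ‖(wordProd A w : E2 →L[ℝ] E2)‖

/-- `α₂(w) = ‖A_w⁻¹‖⁻¹`, the smallest singular value. -/
noncomputable def alpha2 {N : ℕ} (A : Fin N → (E2 ≃L[ℝ] E2)) (w : List (Fin N)) : ℝ :=
  ‖((wordProd A w).symm : E2 →L[ℝ] E2)‖⁻¹

/-- `|det A_w|`. -/
noncomputable def detAbs {N : ℕ} (A : Fin N → (E2 ≃L[ℝ] E2)) (w : List (Fin N)) : ℝ :=
  |LinearMap.det ((wordProd A w : E2 →L[ℝ] E2) : E2 →ₗ[ℝ] E2)|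

/-- The singular value function `φ^s`. -/
noncomputable def phiSVF {N : ℕ} (A : Fin N → (E2 ≃L[ℝ] E2)) (s : ℝ) (w : List (Fin N)) : ℝ :=
  if s < 1 then alpha1 A w ^ s
  else if s < 2 then alpha1 A w * alpha2 A w ^ (s - 1)
  else detAbs A w ^ (s / 2)

/-- The tuple `A` is dominated: `α₂(w) ≤ C τ^{|w|} α₁(w)` for some `C > 0`, `0 < τ < 1`. -/
def Dominated {N : ℕ} (A : Fin N → (E2 ≃L[ℝ] E2)) : Prop :=
  ∃ C > (0 : ℝ), ∃ t ∈ Set.Ioo (0 : ℝ) 1,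
    ∀ w : List (Fin N), alpha2 A w ≤ C * t ^ w.length * alpha1 A w

/-- `μ` is quasi-Bernoulli: `C⁻¹ μ[u]μ[v] ≤ μ[uv] ≤ C μ[u]μ[v]`. -/
def QuasiBernoulli {N : ℕ} (μ : MeasureTheory.Measure (ℕ → Fin N)) : Prop :=
  ∃ C : ℝ, 1 ≤ C ∧ ∀ u v : List (Fin N),
    C⁻¹ * (cylMass μ u * cylMass μ v) ≤ cylMass μ (u ++ v) ∧
      cylMass μ (u ++ v) ≤ C * (cylMass μ u * cylMass μ v)

/-- `μ` is fully supported: every cylinder has positive measure. -/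
def FullySupported {N : ℕ} (μ : MeasureTheory.Measure (ℕ → Fin N)) : Prop :=
  ∀ w : List (Fin N), 0 < cylMass μ w

/-- The potential `ψ^{q,s}(w) = μ[w]^q φ^s(w)^{1-q}`. -/
noncomputable def psiPot {N : ℕ} (A : Fin N → (E2 ≃L[ℝ] E2))
    (μ : MeasureTheory.Measure (ℕ → Fin N)) (q s : ℝ) (w : List (Fin N)) : ℝ :=
  cylMass μ w ^ q * phiSVF A s w ^ (1 - q)

/-- The pressure `P(θ) = lim_n (1/n) log Σ_{|w|=n} θ(w)` (as a `limsup`). -/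
noncomputable def pressure {N : ℕ} (θ : List (Fin N) → ℝ) : ℝ :=
  Filter.limsup
    (fun n : ℕ => (n : ℝ)⁻¹ * Real.log (∑ w : Fin n → Fin N, θ (List.ofFn w))) atTop

open scoped ENNReal

namespace Stmt16Aux

variable {N : ℕ}

theorem wordProd_cons (A : Fin N → (E2 ≃L[ℝ] E2)) (i : Fin N) (w : List (Fin N)) :
    wordProd A (i :: w) = A i * wordProd A w := by
  simp [wordProd]

theorem wordProd_singleton (A : Fin N → (E2 ≃L[ℝ] E2)) (i : Fin N) :
    wordProd A [i] = A i := by simp [wordProd]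

theorem coe_mul' (e f : E2 ≃L[ℝ] E2) :
    ((e * f : E2 ≃L[ℝ] E2) : E2 →L[ℝ] E2) = (e : E2 →L[ℝ] E2).comp (f : E2 →L[ℝ] E2) := rfl

theorem symm_mul' (e f : E2 ≃L[ℝ] E2) :
    ((e * f).symm : E2 →L[ℝ] E2)
      = (f.symm : E2 →L[ℝ] E2).comp (e.symm : E2 →L[ℝ] E2) := by
  have h : (e * f)⁻¹ = f⁻¹ * e⁻¹ := mul_inv_rev e f
  show (((e * f)⁻¹ : E2 ≃L[ℝ] E2) : E2 →L[ℝ] E2) = _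
  rw [h]
  rfl

theorem coe_ne_zero (e : E2 ≃L[ℝ] E2) : (e : E2 →L[ℝ] E2) ≠ 0 := by
  intro h
  obtain ⟨x, hx⟩ := exists_ne (0 : E2)
  apply hx
  have h0 : (e : E2 →L[ℝ] E2) x = 0 := by rw [h]; rfl
  exact e.injective (by simpa using h0)

theorem norm_coe_pos (e : E2 ≃L[ℝ] E2) : 0 < ‖(e : E2 →L[ℝ] E2)‖ :=
  norm_pos_iff.mpr (coe_ne_zero e)

theorem alpha1_pos (A : Fin N → (E2 ≃L[ℝ] E2)) (w : List (Fin N)) : 0 < alpha1 A w :=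
  norm_coe_pos _

theorem alpha2_pos (A : Fin N → (E2 ≃L[ℝ] E2)) (w : List (Fin N)) : 0 < alpha2 A w :=
  inv_pos.mpr (norm_coe_pos _)

theorem alpha1_nil (A : Fin N → (E2 ≃L[ℝ] E2)) : alpha1 A ([] : List (Fin N)) = 1 := by
  show ‖ContinuousLinearMap.id ℝ E2‖ = 1
  exact ContinuousLinearMap.norm_id

theorem alpha2_nil (A : Fin N → (E2 ≃L[ℝ] E2)) : alpha2 A ([] : List (Fin N)) = 1 := by
  show ‖ContinuousLinearMap.id ℝ E2‖⁻¹ = 1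
  rw [ContinuousLinearMap.norm_id, inv_one]

theorem detAbs_nil (A : Fin N → (E2 ≃L[ℝ] E2)) : detAbs A ([] : List (Fin N)) = 1 := by
  show |LinearMap.det (LinearMap.id : E2 →ₗ[ℝ] E2)| = 1
  rw [LinearMap.det_id, abs_one]

theorem alpha1_cons_le (A : Fin N → (E2 ≃L[ℝ] E2)) (i : Fin N) (w : List (Fin N)) :
    alpha1 A (i :: w) ≤ alpha1 A [i] * alpha1 A w := by
  rw [alpha1, alpha1, alpha1, wordProd_singleton, wordProd_cons, coe_mul']
  exact ContinuousLinearMap.opNorm_comp_le _ _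

theorem alpha2_cons_le (A : Fin N → (E2 ≃L[ℝ] E2)) (i : Fin N) (w : List (Fin N)) :
    alpha2 A [i] * alpha2 A w ≤ alpha2 A (i :: w) := by
  rw [alpha2, alpha2, alpha2, wordProd_singleton, wordProd_cons, symm_mul']
  have hle := ContinuousLinearMap.opNorm_comp_le
    ((wordProd A w).symm : E2 →L[ℝ] E2) ((A i).symm : E2 →L[ℝ] E2)
  have h1 := norm_coe_pos (A i).symm
  have h2 := norm_coe_pos (wordProd A w).symm
  have h3 : (0:ℝ) < ‖((wordProd A w).symm : E2 →L[ℝ] E2).comp ((A i).symm : E2 →L[ℝ] E2)‖ := by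
    rw [← symm_mul']
    exact norm_coe_pos _
  rw [← mul_inv, mul_comm]
  exact inv_anti₀ h3 hle

theorem alpha2_le_alpha1 (A : Fin N → (E2 ≃L[ℝ] E2)) (w : List (Fin N)) :
    alpha2 A w ≤ alpha1 A w := by
  rw [alpha2, alpha1]
  have h1 : ((wordProd A w : E2 →L[ℝ] E2)).comp ((wordProd A w).symm : E2 →L[ℝ] E2)
      = ContinuousLinearMap.id ℝ E2 := by
    ext x; simp
  have h2 : (1:ℝ) ≤ ‖(wordProd A w : E2 →L[ℝ] E2)‖ * ‖((wordProd A w).symm : E2 →L[ℝ] E2)‖ := by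
    calc (1:ℝ) = ‖ContinuousLinearMap.id ℝ E2‖ := ContinuousLinearMap.norm_id.symm
      _ = ‖((wordProd A w : E2 →L[ℝ] E2)).comp ((wordProd A w).symm : E2 →L[ℝ] E2)‖ := by
          rw [h1]
      _ ≤ _ := ContinuousLinearMap.opNorm_comp_le _ _
  have h3 := norm_coe_pos (wordProd A w).symm
  have h4 := norm_coe_pos (wordProd A w)
  have h5 : ‖((wordProd A w).symm : E2 →L[ℝ] E2)‖⁻¹ * ‖((wordProd A w).symm : E2 →L[ℝ] E2)‖ = 1 :=
    inv_mul_cancel₀ h3.ne'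
  nlinarith [mul_le_mul_of_nonneg_left h2 (inv_nonneg.mpr h3.le)]

theorem detAbs_cons (A : Fin N → (E2 ≃L[ℝ] E2)) (i : Fin N) (w : List (Fin N)) :
    detAbs A (i :: w) = detAbs A [i] * detAbs A w := by
  rw [detAbs, detAbs, detAbs, wordProd_singleton, wordProd_cons, coe_mul',
    ContinuousLinearMap.toLinearMap_comp, LinearMap.det_comp, abs_mul]

theorem detAbs_single_pos (A : Fin N → (E2 ≃L[ℝ] E2)) (i : Fin N) : 0 < detAbs A [i] := by
  rw [detAbs, wordProd_singleton]
  have h := LinearEquiv.isUnit_det' (A i).toLinearEquiv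
  exact abs_pos.mpr h.ne_zero

theorem detAbs_pos (A : Fin N → (E2 ≃L[ℝ] E2)) (w : List (Fin N)) : 0 < detAbs A w := by
  induction w with
  | nil => rw [detAbs_nil]; exact one_pos
  | cons i t ih => rw [detAbs_cons]; exact mul_pos (detAbs_single_pos A i) ih

theorem cylMass_nil (μ : Measure (ℕ → Fin N)) [IsProbabilityMeasure μ] :
    cylMass μ ([] : List (Fin N)) = 1 := by
  have h : {x : ℕ → Fin N | wordPrefix x (List.length ([] : List (Fin N))) = []} = Set.univ := by
    ext x; simp [wordPrefix]
  rw [cylMass, h, measure_univ, ENNReal.toReal_one]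

theorem cylMass_le_one (μ : Measure (ℕ → Fin N)) [IsProbabilityMeasure μ] (w : List (Fin N)) :
    cylMass μ w ≤ 1 := by
  rw [cylMass]
  calc (μ _).toReal ≤ (1 : ℝ≥0∞).toReal := ENNReal.toReal_mono ENNReal.one_ne_top prob_le_one
    _ = 1 := by simp



theorem abs_invlen_log_le {α : Type*} (len : α → ℕ) {f : α → ℝ} {r R : ℝ} (hr : 0 < r)
    (hpos : ∀ w, 0 < f w)
    (h1 : ∀ w, r ^ len w ≤ f w) (h2 : ∀ w, f w ≤ R ^ len w) (w : α) :
    |(len w : ℝ)⁻¹ * Real.log (f w)| ≤ max |Real.log r| |Real.log R| := by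
  rcases Nat.eq_zero_or_pos (len w) with h | h
  · rw [h]
    simp only [Nat.cast_zero, inv_zero, zero_mul, abs_zero]
    positivity
  · have hn : (0:ℝ) < (len w : ℝ) := by exact_mod_cast h
    have l1 : (len w : ℝ) * Real.log r ≤ Real.log (f w) := by
      rw [← Real.log_pow]; exact Real.log_le_log (pow_pos hr _) (h1 w)
    have l2 : Real.log (f w) ≤ (len w : ℝ) * Real.log R := by
      rw [← Real.log_pow]; exact Real.log_le_log (hpos w) (h2 w)
    rw [abs_le]
    constructor
    · have h' : Real.log r ≤ (len w : ℝ)⁻¹ * Real.log (f w) := by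
        have := mul_le_mul_of_nonneg_left l1 (inv_nonneg.mpr hn.le)
        rwa [← mul_assoc, inv_mul_cancel₀ hn.ne', one_mul] at this
      calc -(max |Real.log r| |Real.log R|) ≤ -|Real.log r| := neg_le_neg (le_max_left _ _)
        _ ≤ Real.log r := neg_abs_le _
        _ ≤ _ := h'
    · have h' : (len w : ℝ)⁻¹ * Real.log (f w) ≤ Real.log R := by
        have := mul_le_mul_of_nonneg_left l2 (inv_nonneg.mpr hn.le)
        rwa [← mul_assoc, inv_mul_cancel₀ hn.ne', one_mul] at this
      exact h'.trans ((le_abs_self _).trans (le_max_right _ _))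

theorem abs_exp_sub_exp_le {x y B : ℝ} (hx : x ≤ B) (hy : y ≤ B) :
    |Real.exp x - Real.exp y| ≤ Real.exp B * |x - y| := by
  rcases le_total y x with h | h
  · rw [abs_of_nonneg (sub_nonneg.mpr (Real.exp_le_exp.mpr h)), abs_of_nonneg (sub_nonneg.mpr h)]
    have e2 := Real.add_one_le_exp (y - x)
    have e1 : Real.exp (y - x) * Real.exp x = Real.exp y := by
      rw [← Real.exp_add]; congr 1; ring
    have e3 : Real.exp x ≤ Real.exp B := Real.exp_le_exp.mpr hx
    have e4 := Real.exp_pos x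
    nlinarith [mul_le_mul_of_nonneg_right e2 e4.le,
      mul_le_mul_of_nonneg_left e3 (sub_nonneg.mpr h)]
  · rw [abs_of_nonpos (sub_nonpos.mpr (Real.exp_le_exp.mpr h)), abs_of_nonpos (sub_nonpos.mpr h)]
    have e2 := Real.add_one_le_exp (x - y)
    have e1 : Real.exp (x - y) * Real.exp y = Real.exp x := by
      rw [← Real.exp_add]; congr 1; ring
    have e3 : Real.exp y ≤ Real.exp B := Real.exp_le_exp.mpr hy
    have e4 := Real.exp_pos y
    nlinarith [mul_le_mul_of_nonneg_right e2 e4.le,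
      mul_le_mul_of_nonneg_left e3 (sub_nonneg.mpr h)]

theorem congrUnif {ι α : Type*} {F G : ι → α → ℝ} {f g : α → ℝ} {l : Filter ι}
    (hFG : ∀ᶠ k in l, ∀ x, F k x = G k x) (hfg : ∀ x, f x = g x)
    (h : TendstoUniformly G g l) : TendstoUniformly F f l := by
  rw [Metric.tendstoUniformly_iff] at h ⊢
  intro ε hε
  filter_upwards [h ε hε, hFG] with k h1 h2 x
  rw [hfg x, h2 x]
  exact h1 x

theorem keyUnif {α : Type*} (P Q S : α → ℝ) (R : ℝ) (hR : 0 ≤ R)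
    (hP : ∀ w, |P w| ≤ R) (hQ : ∀ w, |Q w| ≤ R) (hS : ∀ w, |S w| ≤ R)
    {a b c : ℕ → ℝ} {a₀ b₀ c₀ : ℝ}
    (ha : Tendsto a atTop (𝓝 a₀)) (hb : Tendsto b atTop (𝓝 b₀))
    (hc : Tendsto c atTop (𝓝 c₀)) :
    TendstoUniformly (fun k w => Real.exp (a k * P w + b k * Q w + c k * S w))
      (fun w => Real.exp (a₀ * P w + b₀ * Q w + c₀ * S w)) atTop := by
  rw [Metric.tendstoUniformly_iff]
  intro ε hε
  set B := (|a₀| + |b₀| + |c₀| + 3) * R with hB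
  set D := Real.exp B * R * 3 with hD
  have hDpos : (0:ℝ) < D + 1 := by positivity
  set δ := min 1 (ε / (D + 1)) with hδ
  have hδpos : 0 < δ := lt_min one_pos (div_pos hε hDpos)
  have hae := Metric.tendsto_nhds.mp ha δ hδpos
  have hbe := Metric.tendsto_nhds.mp hb δ hδpos
  have hce := Metric.tendsto_nhds.mp hc δ hδpos
  filter_upwards [hae, hbe, hce] with k hka hkb hkc w
  rw [Real.dist_eq] at hka hkb hkc ⊢
  have hδ1 : δ ≤ 1 := min_le_left _ _
  have hXB : |a₀ * P w + b₀ * Q w + c₀ * S w| ≤ B := by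
    have t1 : |a₀ * P w + b₀ * Q w + c₀ * S w| ≤ |a₀ * P w| + |b₀ * Q w| + |c₀ * S w| :=
      (abs_add_le _ _).trans (add_le_add_left (abs_add_le _ _) _)
    have t2 : |a₀ * P w| + |b₀ * Q w| + |c₀ * S w| ≤ |a₀| * R + |b₀| * R + |c₀| * R := by
      rw [abs_mul, abs_mul, abs_mul]
      gcongr
      · exact hP w
      · exact hQ w
      · exact hS w
    nlinarith [t1, t2, hR]
  have hka1 : |a k| ≤ |a₀| + 1 := by
    have := abs_sub_abs_le_abs_sub (a k) a₀
    linarith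
  have hkb1 : |b k| ≤ |b₀| + 1 := by
    have := abs_sub_abs_le_abs_sub (b k) b₀
    linarith
  have hkc1 : |c k| ≤ |c₀| + 1 := by
    have := abs_sub_abs_le_abs_sub (c k) c₀
    linarith
  have hYB : |a k * P w + b k * Q w + c k * S w| ≤ B := by
    have t1 : |a k * P w + b k * Q w + c k * S w| ≤ |a k * P w| + |b k * Q w| + |c k * S w| :=
      (abs_add_le _ _).trans (add_le_add_left (abs_add_le _ _) _)
    have t2 : |a k * P w| + |b k * Q w| + |c k * S w|
        ≤ (|a₀| + 1) * R + (|b₀| + 1) * R + (|c₀| + 1) * R := by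
      rw [abs_mul, abs_mul, abs_mul]
      gcongr
      · exact hP w
      · exact hQ w
      · exact hS w
    nlinarith [t1, t2, hR]
  have hdiff : |(a₀ * P w + b₀ * Q w + c₀ * S w) - (a k * P w + b k * Q w + c k * S w)|
      ≤ (|a₀ - a k| + |b₀ - b k| + |c₀ - c k|) * R := by
    have hid : (a₀ * P w + b₀ * Q w + c₀ * S w) - (a k * P w + b k * Q w + c k * S w)
        = (a₀ - a k) * P w + ((b₀ - b k) * Q w + (c₀ - c k) * S w) := by ring
    rw [hid]
    calc |(a₀ - a k) * P w + ((b₀ - b k) * Q w + (c₀ - c k) * S w)|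
        ≤ |(a₀ - a k) * P w| + (|(b₀ - b k) * Q w| + |(c₀ - c k) * S w|) :=
          (abs_add_le _ _).trans (add_le_add_right (abs_add_le _ _) _)
      _ ≤ |a₀ - a k| * R + (|b₀ - b k| * R + |c₀ - c k| * R) := by
          rw [abs_mul, abs_mul, abs_mul]
          gcongr
          · exact hP w
          · exact hQ w
          · exact hS w
      _ = (|a₀ - a k| + |b₀ - b k| + |c₀ - c k|) * R := by ring
  have h3δ : |a₀ - a k| + |b₀ - b k| + |c₀ - c k| ≤ 3 * δ := by
    rw [abs_sub_comm a₀ (a k), abs_sub_comm b₀ (b k), abs_sub_comm c₀ (c k)]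
    linarith
  have hfin : D * δ < ε := by
    have h1 : δ ≤ ε / (D + 1) := min_le_right _ _
    have hD0 : (0:ℝ) ≤ D := by positivity
    calc D * δ ≤ D * (ε / (D + 1)) := mul_le_mul_of_nonneg_left h1 hD0
      _ < ε := by
        rw [← mul_div_assoc, div_lt_iff₀ hDpos]
        nlinarith
  calc |Real.exp (a₀ * P w + b₀ * Q w + c₀ * S w)
        - Real.exp (a k * P w + b k * Q w + c k * S w)|
      ≤ Real.exp B * |(a₀ * P w + b₀ * Q w + c₀ * S w)
          - (a k * P w + b k * Q w + c k * S w)| :=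
        abs_exp_sub_exp_le ((le_abs_self _).trans hXB) ((le_abs_self _).trans hYB)
    _ ≤ Real.exp B * ((|a₀ - a k| + |b₀ - b k| + |c₀ - c k|) * R) :=
        mul_le_mul_of_nonneg_left hdiff (Real.exp_pos B).le
    _ ≤ Real.exp B * ((3 * δ) * R) := by
        have := mul_le_mul_of_nonneg_right h3δ hR
        exact mul_le_mul_of_nonneg_left this (Real.exp_pos B).le
    _ = D * δ := by rw [hD]; ring
    _ < ε := hfin



variable {N : ℕ}

theorem formula1 (A : Fin N → (E2 ≃L[ℝ] E2)) (μ : Measure (ℕ → Fin N)) {q t : ℝ}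
    {w : List (Fin N)} (ht : t < 1) (hu : 0 < cylMass μ w) (hα : 0 < alpha1 A w) :
    psiPot A μ q t w ^ ((w.length : ℝ)⁻¹)
      = Real.exp (q * ((w.length : ℝ)⁻¹ * Real.log (cylMass μ w))
          + ((1 - q) * t) * ((w.length : ℝ)⁻¹ * Real.log (alpha1 A w))) := by
  have hφ : phiSVF A t w = alpha1 A w ^ t := if_pos ht
  have hφpos : 0 < phiSVF A t w := by rw [hφ]; exact Real.rpow_pos_of_pos hα t
  have hψpos : 0 < psiPot A μ q t w :=
    mul_pos (Real.rpow_pos_of_pos hu q) (Real.rpow_pos_of_pos hφpos (1 - q))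
  have hlog : Real.log (psiPot A μ q t w)
      = q * Real.log (cylMass μ w) + (1 - q) * (t * Real.log (alpha1 A w)) := by
    unfold psiPot
    rw [Real.log_mul (Real.rpow_pos_of_pos hu q).ne' (Real.rpow_pos_of_pos hφpos (1 - q)).ne',
      Real.log_rpow hu, Real.log_rpow hφpos, hφ, Real.log_rpow hα]
  rw [Real.rpow_def_of_pos hψpos, hlog]
  congr 1
  ring

theorem formula2 (A : Fin N → (E2 ≃L[ℝ] E2)) (μ : Measure (ℕ → Fin N)) {q t : ℝ}
    {w : List (Fin N)} (ht1 : 1 ≤ t) (ht2 : t < 2) (hu : 0 < cylMass μ w)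
    (hα : 0 < alpha1 A w) (hα2 : 0 < alpha2 A w) :
    psiPot A μ q t w ^ ((w.length : ℝ)⁻¹)
      = Real.exp (q * ((w.length : ℝ)⁻¹ * Real.log (cylMass μ w))
          + (1 - q) * ((w.length : ℝ)⁻¹ * Real.log (alpha1 A w))
          + ((1 - q) * (t - 1)) * ((w.length : ℝ)⁻¹ * Real.log (alpha2 A w))) := by
  have hφ : phiSVF A t w = alpha1 A w * alpha2 A w ^ (t - 1) := by
    unfold phiSVF
    rw [if_neg (not_lt.mpr ht1), if_pos ht2]
  have hφpos : 0 < phiSVF A t w := by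
    rw [hφ]; exact mul_pos hα (Real.rpow_pos_of_pos hα2 _)
  have hψpos : 0 < psiPot A μ q t w :=
    mul_pos (Real.rpow_pos_of_pos hu q) (Real.rpow_pos_of_pos hφpos (1 - q))
  have hlog : Real.log (psiPot A μ q t w)
      = q * Real.log (cylMass μ w)
        + (1 - q) * (Real.log (alpha1 A w) + (t - 1) * Real.log (alpha2 A w)) := by
    unfold psiPot
    rw [Real.log_mul (Real.rpow_pos_of_pos hu q).ne' (Real.rpow_pos_of_pos hφpos (1 - q)).ne',
      Real.log_rpow hu, Real.log_rpow hφpos, hφ,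
      Real.log_mul hα.ne' (Real.rpow_pos_of_pos hα2 _).ne', Real.log_rpow hα2]
  rw [Real.rpow_def_of_pos hψpos, hlog]
  congr 1
  ring

theorem formula3 (A : Fin N → (E2 ≃L[ℝ] E2)) (μ : Measure (ℕ → Fin N)) {q t : ℝ}
    {w : List (Fin N)} (ht : 2 ≤ t) (hu : 0 < cylMass μ w) (hd : 0 < detAbs A w) :
    psiPot A μ q t w ^ ((w.length : ℝ)⁻¹)
      = Real.exp (q * ((w.length : ℝ)⁻¹ * Real.log (cylMass μ w))
          + ((1 - q) * (t / 2)) * ((w.length : ℝ)⁻¹ * Real.log (detAbs A w))) := by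
  have hφ : phiSVF A t w = detAbs A w ^ (t / 2) := by
    unfold phiSVF
    rw [if_neg (not_lt.mpr (le_trans one_le_two ht)), if_neg (not_lt.mpr ht)]
  have hφpos : 0 < phiSVF A t w := by rw [hφ]; exact Real.rpow_pos_of_pos hd _
  have hψpos : 0 < psiPot A μ q t w :=
    mul_pos (Real.rpow_pos_of_pos hu q) (Real.rpow_pos_of_pos hφpos (1 - q))
  have hlog : Real.log (psiPot A μ q t w)
      = q * Real.log (cylMass μ w) + (1 - q) * ((t / 2) * Real.log (detAbs A w)) := by
    unfold psiPot
    rw [Real.log_mul (Real.rpow_pos_of_pos hu q).ne' (Real.rpow_pos_of_pos hφpos (1 - q)).ne',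
      Real.log_rpow hu, Real.log_rpow hφpos, hφ, Real.log_rpow hd]
  rw [Real.rpow_def_of_pos hψpos, hlog]
  congr 1
  ring


end Stmt16Aux

/-- If `(q_k, s_k) ∈ ℝ × (0,∞)∖{1,2}` converges to
`(q,s) ∈ ℝ × (0,∞)∖{1,2}`, then `ψ^{q_k,s_k}(w)^{1/|w|} → ψ^{q,s}(w)^{1/|w|}` uniformly over
all finite words `w`. -/
theorem stmt_16 {N : ℕ} (A : Fin N → (E2 ≃L[ℝ] E2))
    (hA : ∀ i : Fin N, alpha1 A [i] < 1) (hdom : Dominated A)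
    (μ : Measure (ℕ → Fin N)) [IsProbabilityMeasure μ]
    (hqb : QuasiBernoulli μ) (hfs : FullySupported μ)
    (qk sk : ℕ → ℝ) (q s : ℝ)
    (hsk : ∀ k, 0 < sk k ∧ sk k ≠ 1 ∧ sk k ≠ 2)
    (hs : 0 < s ∧ s ≠ 1 ∧ s ≠ 2)
    (hconv : Tendsto (fun k => (qk k, sk k)) atTop (𝓝 (q, s))) :
    TendstoUniformly
      (fun k (w : List (Fin N)) => psiPot A μ (qk k) (sk k) w ^ ((w.length : ℝ)⁻¹))
      (fun w => psiPot A μ q s w ^ ((w.length : ℝ)⁻¹))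
      atTop := by
  classical
  obtain ⟨hs0, hs1, hs2⟩ := hs
  have hqk : Tendsto qk atTop (𝓝 q) := (continuous_fst.tendsto (q, s)).comp hconv
  have hskt : Tendsto sk atTop (𝓝 s) := (continuous_snd.tendsto (q, s)).comp hconv
  rcases Nat.eq_zero_or_pos N with hN | hN
  · subst hN
    rw [Metric.tendstoUniformly_iff]
    intro ε hε
    filter_upwards with k w
    have hw : w = [] := by
      cases w with
      | nil => rfl
      | cons i t => exact i.elim0
    subst hw
    simp only [List.length_nil, Nat.cast_zero, inv_zero, Real.rpow_zero, dist_self]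
    exact hε
  haveI : Nonempty (Fin N) := ⟨⟨0, hN⟩⟩
  have hne : (Finset.univ : Finset (Fin N)).Nonempty := Finset.univ_nonempty
  obtain ⟨C, hC1, hC⟩ := hqb
  have hCpos : (0:ℝ) < C := lt_of_lt_of_le one_pos hC1
  -- measure bounds
  set m := Finset.univ.inf' hne (fun i => cylMass μ [i]) with hm_def
  have hm : 0 < m := by
    rw [Finset.lt_inf'_iff]
    exact fun i _ => hfs [i]
  set ρ := C⁻¹ * m with hρ_def
  have hρ : 0 < ρ := mul_pos (inv_pos.mpr hCpos) hm
  have hcyl_low : ∀ w : List (Fin N), ρ ^ w.length ≤ cylMass μ w := by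
    intro w
    induction w with
    | nil => simp [Stmt16Aux.cylMass_nil μ]
    | cons i t ih =>
      have h1 := (hC [i] t).1
      have hmle : m ≤ cylMass μ [i] := Finset.inf'_le (fun j => cylMass μ [j]) (Finset.mem_univ i)
      calc ρ ^ (i :: t).length = ρ * ρ ^ t.length := by
            rw [List.length_cons, pow_succ]; ring
        _ ≤ (C⁻¹ * cylMass μ [i]) * cylMass μ t := by
            apply mul_le_mul _ ih (pow_nonneg hρ.le _) (mul_nonneg (inv_nonneg.mpr hCpos.le) (hfs [i]).le)
            rw [hρ_def]
            exact mul_le_mul_of_nonneg_left hmle (inv_nonneg.mpr hCpos.le)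
        _ = C⁻¹ * (cylMass μ [i] * cylMass μ t) := by ring
        _ ≤ cylMass μ ([i] ++ t) := h1
        _ = cylMass μ (i :: t) := rfl
  have hcyl_up : ∀ w : List (Fin N), cylMass μ w ≤ (1:ℝ) ^ w.length := fun w => by
    rw [one_pow]; exact Stmt16Aux.cylMass_le_one μ w
  -- alpha bounds
  set b := Finset.univ.sup' hne (fun i => alpha1 A [i]) with hb_def
  set a := Finset.univ.inf' hne (fun i => alpha2 A [i]) with ha_def
  have hapos : 0 < a := by
    rw [Finset.lt_inf'_iff]
    exact fun i _ => Stmt16Aux.alpha2_pos A [i]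
  have halpha1_up : ∀ w : List (Fin N), alpha1 A w ≤ b ^ w.length := by
    intro w
    induction w with
    | nil => simp [Stmt16Aux.alpha1_nil]
    | cons i t ih =>
      have hb0 : 0 ≤ b := le_trans (Stmt16Aux.alpha1_pos A [i]).le
        (Finset.le_sup' (fun j => alpha1 A [j]) (Finset.mem_univ i))
      calc alpha1 A (i :: t) ≤ alpha1 A [i] * alpha1 A t := Stmt16Aux.alpha1_cons_le A i t
        _ ≤ b * b ^ t.length :=
            mul_le_mul (Finset.le_sup' (fun j => alpha1 A [j]) (Finset.mem_univ i)) ih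
              (Stmt16Aux.alpha1_pos A t).le hb0
        _ = b ^ (i :: t).length := by rw [List.length_cons, pow_succ]; ring
  have halpha2_low : ∀ w : List (Fin N), a ^ w.length ≤ alpha2 A w := by
    intro w
    induction w with
    | nil => simp [Stmt16Aux.alpha2_nil]
    | cons i t ih =>
      calc a ^ (i :: t).length = a * a ^ t.length := by rw [List.length_cons, pow_succ]; ring
        _ ≤ alpha2 A [i] * alpha2 A t :=
            mul_le_mul (Finset.inf'_le (fun j => alpha2 A [j]) (Finset.mem_univ i)) ih
              (pow_nonneg hapos.le _) (Stmt16Aux.alpha2_pos A [i]).le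
        _ ≤ alpha2 A (i :: t) := Stmt16Aux.alpha2_cons_le A i t
  have halpha1_low : ∀ w : List (Fin N), a ^ w.length ≤ alpha1 A w := fun w =>
    (halpha2_low w).trans (Stmt16Aux.alpha2_le_alpha1 A w)
  have halpha2_up : ∀ w : List (Fin N), alpha2 A w ≤ b ^ w.length := fun w =>
    (Stmt16Aux.alpha2_le_alpha1 A w).trans (halpha1_up w)
  -- det bounds
  set d1 := Finset.univ.inf' hne (fun i => detAbs A [i]) with hd1_def
  set d2 := Finset.univ.sup' hne (fun i => detAbs A [i]) with hd2_def
  have hd1 : 0 < d1 := by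
    rw [Finset.lt_inf'_iff]
    exact fun i _ => Stmt16Aux.detAbs_single_pos A i
  have hdet_low : ∀ w : List (Fin N), d1 ^ w.length ≤ detAbs A w := by
    intro w
    induction w with
    | nil => simp [Stmt16Aux.detAbs_nil]
    | cons i t ih =>
      calc d1 ^ (i :: t).length = d1 * d1 ^ t.length := by rw [List.length_cons, pow_succ]; ring
        _ ≤ detAbs A [i] * detAbs A t :=
            mul_le_mul (Finset.inf'_le (fun j => detAbs A [j]) (Finset.mem_univ i)) ih
              (pow_nonneg hd1.le _) (Stmt16Aux.detAbs_single_pos A i).le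
        _ = detAbs A (i :: t) := (Stmt16Aux.detAbs_cons A i t).symm
  have hdet_up : ∀ w : List (Fin N), detAbs A w ≤ d2 ^ w.length := by
    intro w
    induction w with
    | nil => simp [Stmt16Aux.detAbs_nil]
    | cons i t ih =>
      have hd20 : 0 ≤ d2 := le_trans (Stmt16Aux.detAbs_single_pos A i).le
        (Finset.le_sup' (fun j => detAbs A [j]) (Finset.mem_univ i))
      calc detAbs A (i :: t) = detAbs A [i] * detAbs A t := Stmt16Aux.detAbs_cons A i t
        _ ≤ d2 * d2 ^ t.length :=
            mul_le_mul (Finset.le_sup' (fun j => detAbs A [j]) (Finset.mem_univ i)) ih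
              (Stmt16Aux.detAbs_pos A t).le hd20
        _ = d2 ^ (i :: t).length := by rw [List.length_cons, pow_succ]; ring
  -- the bounded exponent functions
  set R := max (max (max |Real.log ρ| |Real.log (1:ℝ)|) (max |Real.log a| |Real.log b|))
    (max |Real.log d1| |Real.log d2|) with hR_def
  have hR0 : (0:ℝ) ≤ R := by positivity
  have hRP : ∀ w : List (Fin N), |(w.length : ℝ)⁻¹ * Real.log (cylMass μ w)| ≤ R := by
    intro w
    refine le_trans (Stmt16Aux.abs_invlen_log_le List.length hρ hfs hcyl_low hcyl_up w) ?_
    exact le_trans (le_max_left _ _) (le_max_left _ _)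
  have hRQ1 : ∀ w : List (Fin N), |(w.length : ℝ)⁻¹ * Real.log (alpha1 A w)| ≤ R := by
    intro w
    refine le_trans (Stmt16Aux.abs_invlen_log_le List.length hapos (Stmt16Aux.alpha1_pos A)
      halpha1_low halpha1_up w) ?_
    exact le_trans (le_max_right _ _) (le_max_left _ _)
  have hRQ2 : ∀ w : List (Fin N), |(w.length : ℝ)⁻¹ * Real.log (alpha2 A w)| ≤ R := by
    intro w
    refine le_trans (Stmt16Aux.abs_invlen_log_le List.length hapos (Stmt16Aux.alpha2_pos A)
      halpha2_low halpha2_up w) ?_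
    exact le_trans (le_max_right _ _) (le_max_left _ _)
  have hRQ3 : ∀ w : List (Fin N), |(w.length : ℝ)⁻¹ * Real.log (detAbs A w)| ≤ R := by
    intro w
    refine le_trans (Stmt16Aux.abs_invlen_log_le List.length hd1 (Stmt16Aux.detAbs_pos A)
      hdet_low hdet_up w) ?_
    exact le_max_right _ _
  -- branch analysis
  rcases lt_trichotomy s 1 with hcase | hcase | hcase
  · -- s < 1
    have hev : ∀ᶠ k in atTop, sk k < 1 := hskt.eventually_lt_const hcase
    have hbt : Tendsto (fun k => (1 - qk k) * sk k) atTop (𝓝 ((1 - q) * s)) :=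
      (tendsto_const_nhds.sub hqk).mul hskt
    have hct : Tendsto (fun _ : ℕ => (0:ℝ)) atTop (𝓝 0) := tendsto_const_nhds
    refine Stmt16Aux.congrUnif ?_ ?_
      (Stmt16Aux.keyUnif (fun w => (w.length : ℝ)⁻¹ * Real.log (cylMass μ w))
        (fun w => (w.length : ℝ)⁻¹ * Real.log (alpha1 A w))
        (fun _ => (0:ℝ)) R hR0 hRP hRQ1 (fun w => by simpa using hR0)
        hqk hbt hct)
    · filter_upwards [hev] with k hk w
      rw [Stmt16Aux.formula1 A μ hk (hfs w) (Stmt16Aux.alpha1_pos A w)]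
      norm_num
    · intro w
      rw [Stmt16Aux.formula1 A μ hcase (hfs w) (Stmt16Aux.alpha1_pos A w)]
      norm_num
  · exact absurd hcase hs1
  · rcases lt_trichotomy s 2 with hcase2 | hcase2 | hcase2
    · -- 1 < s < 2
      have hev1 : ∀ᶠ k in atTop, 1 < sk k := hskt.eventually_const_lt hcase
      have hev2 : ∀ᶠ k in atTop, sk k < 2 := hskt.eventually_lt_const hcase2
      have hbt : Tendsto (fun k => 1 - qk k) atTop (𝓝 (1 - q)) := tendsto_const_nhds.sub hqk
      have hct : Tendsto (fun k => (1 - qk k) * (sk k - 1)) atTop (𝓝 ((1 - q) * (s - 1))) :=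
        (tendsto_const_nhds.sub hqk).mul (hskt.sub tendsto_const_nhds)
      refine Stmt16Aux.congrUnif ?_ ?_
        (Stmt16Aux.keyUnif (fun w => (w.length : ℝ)⁻¹ * Real.log (cylMass μ w))
          (fun w => (w.length : ℝ)⁻¹ * Real.log (alpha1 A w))
          (fun w => (w.length : ℝ)⁻¹ * Real.log (alpha2 A w)) R hR0 hRP hRQ1 hRQ2
          hqk hbt hct)
      · filter_upwards [hev1, hev2] with k hk1 hk2 w
        rw [Stmt16Aux.formula2 A μ hk1.le hk2 (hfs w) (Stmt16Aux.alpha1_pos A w)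
          (Stmt16Aux.alpha2_pos A w)]
      · intro w
        rw [Stmt16Aux.formula2 A μ hcase.le hcase2 (hfs w) (Stmt16Aux.alpha1_pos A w)
          (Stmt16Aux.alpha2_pos A w)]
    · exact absurd hcase2 hs2
    · -- 2 < s
      have hev : ∀ᶠ k in atTop, 2 < sk k := hskt.eventually_const_lt hcase2
      have hbt : Tendsto (fun k => (1 - qk k) * (sk k / 2)) atTop (𝓝 ((1 - q) * (s / 2))) :=
        (tendsto_const_nhds.sub hqk).mul (hskt.div_const 2)
      have hct : Tendsto (fun _ : ℕ => (0:ℝ)) atTop (𝓝 0) := tendsto_const_nhds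
      refine Stmt16Aux.congrUnif ?_ ?_
        (Stmt16Aux.keyUnif (fun w => (w.length : ℝ)⁻¹ * Real.log (cylMass μ w))
          (fun w => (w.length : ℝ)⁻¹ * Real.log (detAbs A w))
          (fun _ => (0:ℝ)) R hR0 hRP hRQ3 (fun w => by simpa using hR0)
          hqk hbt hct)
      · filter_upwards [hev] with k hk w
        rw [Stmt16Aux.formula3 A μ hk.le (hfs w) (Stmt16Aux.detAbs_pos A w)]
        norm_num
      · intro w
        rw [Stmt16Aux.formula3 A μ hcase2.le (hfs w) (Stmt16Aux.detAbs_pos A w)]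
        norm_num
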